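/- Let φ and ψ be Young functions with lim_{x→∞} φ(x)/x = ∞. If φ^{-1} ∘ ψ is equivalent to a Young function, then (ψ*)^{-1} ∘ φ* is also equivalent to a Young function. -/

import Mathlib

open Filter Topology MeasureTheory
open scoped ENNReal
noncomputable section

/-- A Young function: strictly increasing, convex on `[0,∞)`, vanishing at `0`. -/
def IsYoung (f : ℝ → ℝ) : Prop :=
  StrictMonoOn f (Set.Ici 0) ∧ ConvexOn ℝ (Set.Ici 0) f ∧ f 0 = 0

/-- Legendre transform of a real function (sup over `y ≥ 0`), `ℝ≥0∞`-valued. -/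
def Leg (f : ℝ → ℝ) (x : ℝ) : ℝ≥0∞ :=
  ⨆ y : {y : ℝ // 0 ≤ y}, ENNReal.ofReal (x * y - f y)

/-- Legendre transform of an `ℝ≥0∞`-valued function. -/
def LegE (f : ℝ → ℝ≥0∞) (x : ℝ) : ℝ≥0∞ :=
  ⨆ y : {y : ℝ // 0 ≤ y}, (ENNReal.ofReal (x * y) - f y)

/-- Monotone extension of a real function on `[0,∞)` to `ℝ≥0∞` arguments. -/
def extE (f : ℝ → ℝ) (t : ℝ≥0∞) : ℝ≥0∞ :=
  ⨆ s : {s : ℝ // 0 ≤ s ∧ ENNReal.ofReal s ≤ t}, ENNReal.ofReal (f s)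

/-- Monotone extension of an `ℝ≥0∞`-valued function to `ℝ≥0∞` arguments. -/
def extLT (f : ℝ → ℝ≥0∞) (t : ℝ≥0∞) : ℝ≥0∞ :=
  ⨆ s : {s : ℝ // 0 ≤ s ∧ ENNReal.ofReal s ≤ t}, f s

/-- Generalized (right-continuous) inverse of an `ℝ≥0∞`-valued function. -/
def invE (g : ℝ → ℝ≥0∞) (t : ℝ≥0∞) : ℝ≥0∞ :=
  ⨅ s : {s : ℝ // 0 ≤ s ∧ t ≤ g s}, ENNReal.ofReal s

/-- `ρ(x) = sup_{y ≥ 0} (φ(xy) - ψ(y))/y`. -/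
def rhoSup (φ ψ : ℝ → ℝ) (x : ℝ) : ℝ≥0∞ :=
  ⨆ y : {y : ℝ // 0 ≤ y}, ENNReal.ofReal ((φ (x * y) - ψ y) / y)

/-- `ζ(x) = sup_{y ≥ 0} (φ(xy) - ψ(y)/y)`. -/
def zetaSup (φ ψ : ℝ → ℝ) (x : ℝ) : ℝ≥0∞ :=
  ⨆ y : {y : ℝ // 0 ≤ y}, ENNReal.ofReal (φ (x * y) - ψ y / y)

/-- Domination order on real functions: `f(x) ≤ C₁ g(C₂ x)` for large `x`. -/
def DominR (f g : ℝ → ℝ) : Prop :=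
  ∃ C₁ C₂ x₀ : ℝ, 0 < C₁ ∧ 0 < C₂ ∧ 0 < x₀ ∧ ∀ x ≥ x₀, f x ≤ C₁ * g (C₂ * x)

/-- Equivalence of real functions: mutual domination. -/
def EquivR (f g : ℝ → ℝ) : Prop := DominR f g ∧ DominR g f

/-- Domination order on `ℝ≥0∞`-valued functions. -/
def DominE (f g : ℝ → ℝ≥0∞) : Prop :=
  ∃ C₁ C₂ x₀ : ℝ, 0 < C₁ ∧ 0 < C₂ ∧ 0 < x₀ ∧
    ∀ x ≥ x₀, f x ≤ ENNReal.ofReal C₁ * g (C₂ * x)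

/-- Equivalence of `ℝ≥0∞`-valued functions: mutual domination. -/
def EquivE (f g : ℝ → ℝ≥0∞) : Prop := DominE f g ∧ DominE g f

open Set

lemma IsYoung.nonneg {f : ℝ → ℝ} (hf : IsYoung f) {x : ℝ} (hx : 0 ≤ x) : 0 ≤ f x := by
  rcases eq_or_lt_of_le hx with h | h
  · simp [← h, hf.2.2]
  · have := hf.1 (le_refl (0:ℝ)) (le_of_lt h) h
    simpa [hf.2.2] using this.le

lemma IsYoung.monoOn {f : ℝ → ℝ} (hf : IsYoung f) : MonotoneOn f (Set.Ici 0) :=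
  hf.1.monotoneOn

lemma IsYoung.mono' {f : ℝ → ℝ} (hf : IsYoung f) {a b : ℝ} (ha : 0 ≤ a) (hab : a ≤ b) :
    f a ≤ f b := hf.monoOn ha (le_trans ha hab) hab

lemma IsYoung.pos {f : ℝ → ℝ} (hf : IsYoung f) {x : ℝ} (hx : 0 < x) : 0 < f x := by
  have := hf.1 (le_refl (0:ℝ)) hx.le hx
  simpa [hf.2.2] using this

lemma IsYoung.le_of_le {f : ℝ → ℝ} (hf : IsYoung f) {a b : ℝ} (ha : 0 ≤ a) (hb : 0 ≤ b)
    (h : f a ≤ f b) : a ≤ b := by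
  by_contra hab
  exact absurd (hf.1 hb ha (lt_of_not_ge hab)) (not_lt.2 h)

/-- slope inequality : for `0 ≤ a ≤ b`, `f a * b ≤ f b * a`. -/
lemma IsYoung.slope {f : ℝ → ℝ} (hf : IsYoung f) {a b : ℝ} (ha : 0 ≤ a) (hab : a ≤ b) :
    f a * b ≤ f b * a := by
  rcases eq_or_lt_of_le (le_trans ha hab) with hb | hb
  · have : a = 0 := le_antisymm (hab.trans hb.symm.le) ha
    simp [this, ← hb, hf.2.2]
  · have h1 : f a ≤ (a / b) * f b := by
      have hcvx := hf.2.1.2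
      have hc := hcvx (x := (0:ℝ)) (y := b) (Set.self_mem_Ici) (Set.mem_Ici.2 (le_trans ha hab))
        (a := 1 - a / b) (b := a / b) (by
          have : a / b ≤ 1 := (div_le_one hb).2 hab
          linarith) (by positivity) (by ring)
      have : (1 - a / b) • (0:ℝ) + (a / b) • b = a := by
        simp only [smul_eq_mul, mul_zero, zero_add]; field_simp
      rw [this] at hc
      simpa [hf.2.2] using hc
    calc f a * b ≤ ((a/b) * f b) * b := by nlinarith
      _ = f b * a := by field_simp

lemma IsYoung.scale_ge {f : ℝ → ℝ} (hf : IsYoung f) {c x : ℝ} (hc : 1 ≤ c) (hx : 0 ≤ x) :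
    c * f x ≤ f (c * x) := by
  rcases eq_or_lt_of_le hx with h | h
  · simp [← h, hf.2.2]
  · have := hf.slope (a := x) (b := c * x) hx (by nlinarith)
    calc c * f x = (f x * (c * x)) / x := by field_simp
      _ ≤ (f (c*x) * x) / x := by gcongr
      _ = f (c*x) := by field_simp

lemma IsYoung.lin_growth {f : ℝ → ℝ} (hf : IsYoung f) {x : ℝ} (hx : 1 ≤ x) :
    f 1 * x ≤ f x := by
  simpa using hf.slope (a := 1) (b := x) zero_le_one hx

/-- real Legendre sup -/
def SupS (f : ℝ → ℝ) (x : ℝ) : ℝ := sSup {z | ∃ y, 0 ≤ y ∧ z = x * y - f y}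

/-- superlinearity predicate -/
def Superlin (f : ℝ → ℝ) : Prop := ∀ s : ℝ, ∃ M, 0 ≤ M ∧ ∀ v, M ≤ v → s * v ≤ f v

lemma supS_mem_zero {f : ℝ → ℝ} (hf0 : f 0 = 0) :
    (0:ℝ) ∈ {z | ∃ y, 0 ≤ y ∧ z = x * y - f y} := ⟨0, le_refl 0, by simp [hf0]⟩

lemma supS_nonempty (f : ℝ → ℝ) (hf0 : f 0 = 0) (x : ℝ) :
    {z | ∃ y, 0 ≤ y ∧ z = x * y - f y}.Nonempty := ⟨0, supS_mem_zero hf0⟩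

lemma supS_bdd {f : ℝ → ℝ} (hf : IsYoung f) (hsl : Superlin f) (x : ℝ) (hx : 0 ≤ x) :
    BddAbove {z | ∃ y, 0 ≤ y ∧ z = x * y - f y} := by
  obtain ⟨M, hM0, hM⟩ := hsl x
  refine ⟨max 0 (x * M), ?_⟩
  rintro z ⟨y, hy, rfl⟩
  rcases le_total y M with h | h
  · have : x * y - f y ≤ x * M := by
      have := hf.nonneg hy
      nlinarith
    exact this.trans (le_max_right _ _)
  · have := hM y h
    have : x * y - f y ≤ 0 := by linarith
    exact this.trans (le_max_left _ _)

lemma le_supS {f : ℝ → ℝ} (hf : IsYoung f) (hsl : Superlin f) {x : ℝ} (hx : 0 ≤ x)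
    {y : ℝ} (hy : 0 ≤ y) : x * y - f y ≤ SupS f x :=
  le_csSup (supS_bdd hf hsl x hx) ⟨y, hy, rfl⟩

lemma supS_le {f : ℝ → ℝ} (hf0 : f 0 = 0) {x c : ℝ}
    (h : ∀ y, 0 ≤ y → x * y - f y ≤ c) : SupS f x ≤ c := by
  apply csSup_le (supS_nonempty f hf0 x)
  rintro z ⟨y, hy, rfl⟩; exact h y hy

lemma supS_nonneg {f : ℝ → ℝ} (hf : IsYoung f) (hsl : Superlin f) {x : ℝ} (hx : 0 ≤ x) :
    0 ≤ SupS f x := by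
  simpa [hf.2.2] using le_supS hf hsl hx (le_refl (0:ℝ))

lemma supS_mono {f : ℝ → ℝ} (hf : IsYoung f) (hsl : Superlin f) {x₁ x₂ : ℝ}
    (h1 : 0 ≤ x₁) (h12 : x₁ ≤ x₂) : SupS f x₁ ≤ SupS f x₂ := by
  apply supS_le hf.2.2
  intro y hy
  calc x₁ * y - f y ≤ x₂ * y - f y := by nlinarith
    _ ≤ SupS f x₂ := le_supS hf hsl (h1.trans h12) hy

lemma supS_scale {f : ℝ → ℝ} (hf : IsYoung f) (hsl : Superlin f) {A x : ℝ}
    (hA : 1 ≤ A) (hx : 0 ≤ x) : A * SupS f x ≤ SupS f (A * x) := by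
  have hxA : (0:ℝ) ≤ A * x := by positivity
  have h : SupS f x ≤ SupS f (A * x) / A := by
    apply supS_le hf.2.2
    intro y hy
    rw [le_div_iff₀ (lt_of_lt_of_le zero_lt_one hA)]
    have h1 : A * (x * y - f y) ≤ (A * x) * y - f y := by
      have := hf.nonneg hy
      nlinarith
    have h2 : (A*x) * y - f y ≤ SupS f (A*x) := le_supS hf hsl hxA hy
    have hA0 : (0:ℝ) < A := lt_of_lt_of_le zero_lt_one hA
    nlinarith
  have hA0 : (0:ℝ) < A := lt_of_lt_of_le zero_lt_one hA
  calc A * SupS f x ≤ A * (SupS f (A*x) / A) := by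
        apply mul_le_mul_of_nonneg_left h hA0.le
    _ = SupS f (A*x) := by field_simp

lemma supS_exists_gt {f : ℝ → ℝ} (hf0 : f 0 = 0) {x c : ℝ} (hc : c < SupS f x) :
    ∃ y, 0 ≤ y ∧ c < x * y - f y := by
  obtain ⟨z, hz, hcz⟩ := exists_lt_of_lt_csSup (supS_nonempty f hf0 x) hc
  obtain ⟨y, hy, rfl⟩ := hz
  exact ⟨y, hy, hcz⟩

lemma IsYoung.surj {f : ℝ → ℝ} (hf : IsYoung f) : ∀ t, 0 ≤ t → ∃ v, 0 ≤ v ∧ f v = t := by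
  intro t ht
  rcases eq_or_lt_of_le ht with h | h
  · exact ⟨0, le_refl 0, by simp [hf.2.2, ← h]⟩
  · have hf1 : 0 < f 1 := hf.pos zero_lt_one
    set δ : ℝ := min 1 (t / (2 * f 1)) with hδdef
    have hδpos : 0 < δ := lt_min zero_lt_one (by positivity)
    have hδ1 : δ ≤ 1 := min_le_left _ _
    have hfδ : f δ < t := by
      have h1 : f δ ≤ δ * f 1 := by
        have := hf.slope (a := δ) (b := 1) hδpos.le hδ1
        nlinarith
      have h2 : δ * f 1 ≤ (t / (2 * f 1)) * f 1 := by
        have : δ ≤ t / (2 * f 1) := min_le_right _ _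
        nlinarith
      have h3 : (t / (2 * f 1)) * f 1 = t / 2 := by field_simp
      nlinarith
    set M : ℝ := max 1 (max δ (t / f 1)) with hMdef
    have hM1 : 1 ≤ M := le_max_left _ _
    have hMδ : δ ≤ M := le_trans (le_max_left _ _) (le_max_right _ _)
    have hfM : t ≤ f M := by
      have h1 : f 1 * M ≤ f M := hf.lin_growth hM1
      have h2 : t / f 1 ≤ M := le_trans (le_max_right _ _) (le_max_right _ _)
      have : t ≤ f 1 * M := by
        rw [div_le_iff₀ hf1] at h2; nlinarith
      linarith
    have hcont : ContinuousOn f (Set.Icc δ M) := by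
      have hconv : ConvexOn ℝ (Set.Ioi (0:ℝ)) f :=
        hf.2.1.subset (Set.Ioi_subset_Ici (le_refl 0)) (convex_Ioi 0)
      exact (hconv.continuousOn isOpen_Ioi).mono (fun z hz => lt_of_lt_of_le hδpos hz.1)
    have := intermediate_value_Icc hMδ hcont
    have hmem : t ∈ Set.Icc (f δ) (f M) := ⟨hfδ.le, hfM⟩
    obtain ⟨v, hv, hfv⟩ := this hmem
    exact ⟨v, le_trans hδpos.le hv.1, hfv⟩

/-- inverse function package -/
lemma IsYoung.inv_pack {f : ℝ → ℝ} (hf : IsYoung f) :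
    ∃ g : ℝ → ℝ, (∀ t, 0 ≤ t → 0 ≤ g t) ∧ (∀ t, 0 ≤ t → f (g t) = t) ∧
      (∀ s t, 0 ≤ s → s ≤ t → g s ≤ g t) ∧ (∀ v, 0 ≤ v → g (f v) = v) := by
  classical
  refine ⟨fun t => if h : 0 ≤ t then (hf.surj t h).choose else 0, ?_, ?_, ?_, ?_⟩
  · intro t ht; simp only [dif_pos ht]; exact (hf.surj t ht).choose_spec.1
  · intro t ht; simp only [dif_pos ht]; exact (hf.surj t ht).choose_spec.2
  · intro s t hs hst
    have ht : 0 ≤ t := hs.trans hst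
    simp only [dif_pos hs, dif_pos ht]
    apply hf.le_of_le (hf.surj s hs).choose_spec.1 (hf.surj t ht).choose_spec.1
    rw [(hf.surj s hs).choose_spec.2, (hf.surj t ht).choose_spec.2]; exact hst
  · intro v hv
    have hfv : 0 ≤ f v := hf.nonneg hv
    simp only [dif_pos hfv]
    have h1 := (hf.surj (f v) hfv).choose_spec.2
    exact hf.1.injOn (Set.mem_Ici.2 (hf.surj (f v) hfv).choose_spec.1) (Set.mem_Ici.2 hv) h1

section IntegralY
variable {n : ℝ → ℝ} (hn : Monotone n) {c : ℝ} (hc : 0 < c) (hnc : ∀ t, c ≤ n t)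

include hn in
lemma intY_lb (a b : ℝ) (hab : a ≤ b) :
    (b - a) * n a ≤ ∫ t in a..b, n t := by
  have h := intervalIntegral.integral_mono_on (a := a) (b := b) (f := fun _ => n a)
    (g := n) (μ := by volume_tac) hab (intervalIntegrable_const) (hn.intervalIntegrable)
    (fun x hx => hn hx.1)
  simpa [smul_eq_mul, mul_comm] using h

include hn in
lemma intY_ub (a b : ℝ) (hab : a ≤ b) :
    (∫ t in a..b, n t) ≤ (b - a) * n b := by
  have h := intervalIntegral.integral_mono_on (a := a) (b := b) (g := fun _ => n b)
    (f := n) (μ := by volume_tac) hab (hn.intervalIntegrable) (intervalIntegrable_const)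
    (fun x hx => hn hx.2)
  simpa [smul_eq_mul, mul_comm] using h

include hn in
lemma intY_split (a b : ℝ) :
    (∫ t in (0:ℝ)..b, n t) - (∫ t in (0:ℝ)..a, n t) = ∫ t in a..b, n t := by
  rw [← intervalIntegral.integral_add_adjacent_intervals (a := (0:ℝ)) (b := a) (c := b)
    (hn.intervalIntegrable) (hn.intervalIntegrable)]
  ring

include hn hc hnc in
lemma intY_young : IsYoung (fun x => ∫ t in (0:ℝ)..x, n t) := by
  have hpos : ∀ a b : ℝ, a < b →
      0 < (∫ t in (0:ℝ)..b, n t) - (∫ t in (0:ℝ)..a, n t) := by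
    intro a b hab
    rw [intY_split hn a b]
    have h1 := intY_lb hn a b hab.le
    have h2 : c ≤ n a := hnc a
    nlinarith
  refine ⟨?_, ?_, ?_⟩
  · intro a _ b _ hab
    have := hpos a b hab
    linarith
  · apply convexOn_of_slope_mono_adjacent (convex_Ici 0)
    intro x y z hx hz hxy hyz
    rw [div_le_div_iff₀ (by linarith) (by linarith)]
    have e1 : (∫ t in (0:ℝ)..y, n t) - (∫ t in (0:ℝ)..x, n t) = ∫ t in x..y, n t :=
      intY_split hn x y
    have e2 : (∫ t in (0:ℝ)..z, n t) - (∫ t in (0:ℝ)..y, n t) = ∫ t in y..z, n t :=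
      intY_split hn y z
    rw [e1, e2]
    have h1 : (∫ t in x..y, n t) ≤ (y - x) * n y := intY_ub hn x y hxy.le
    have h2 : (z - y) * n y ≤ ∫ t in y..z, n t := intY_lb hn y z hyz.le
    have h3 : (0:ℝ) ≤ z - y := by linarith
    have h4 : (0:ℝ) ≤ y - x := by linarith
    calc (∫ t in x..y, n t) * (z - y) ≤ ((y-x) * n y) * (z-y) := by
          apply mul_le_mul_of_nonneg_right h1 h3
      _ = ((z-y) * n y) * (y-x) := by ring
      _ ≤ (∫ t in y..z, n t) * (y - x) := by apply mul_le_mul_of_nonneg_right h2 h4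
  · simp

include hn in
lemma intY_le (x : ℝ) (hx : 0 ≤ x) : (∫ t in (0:ℝ)..x, n t) ≤ x * n x := by
  have := intY_ub hn 0 x hx
  simpa using this

include hn hc hnc in
lemma intY_nonneg (x : ℝ) (hx : 0 ≤ x) : 0 ≤ ∫ t in (0:ℝ)..x, n t := by
  have := intY_lb hn 0 x hx
  have h2 : c ≤ n 0 := hnc 0
  nlinarith

include hn hc hnc in
lemma intY_two (x : ℝ) (hx : 0 ≤ x) : x * n x ≤ ∫ t in (0:ℝ)..(2*x), n t := by
  have e : (∫ t in (0:ℝ)..(2*x), n t) - (∫ t in (0:ℝ)..x, n t) = ∫ t in x..(2*x), n t :=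
    intY_split hn x (2*x)
  have h1 : (2*x - x) * n x ≤ ∫ t in x..(2*x), n t := intY_lb hn x (2*x) (by linarith)
  have h2 : 0 ≤ ∫ t in (0:ℝ)..x, n t := intY_nonneg hn hc hnc x hx
  nlinarith [h1, h2, e]

end IntegralY
section Main

variable {φ ψ : ℝ → ℝ}

/-- ENNReal interface lemma -/
lemma le_leg (f : ℝ → ℝ) {x y : ℝ} (hy : 0 ≤ y) :
    ENNReal.ofReal (x * y - f y) ≤ Leg f x :=
  le_iSup (fun z : {y : ℝ // 0 ≤ y} => ENNReal.ofReal (x * z - f z)) ⟨y, hy⟩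

lemma leg_le {f : ℝ → ℝ} {x c : ℝ} (h : ∀ y, 0 ≤ y → x * y - f y ≤ c) :
    Leg f x ≤ ENNReal.ofReal c :=
  iSup_le fun z => ENNReal.ofReal_le_ofReal (h z.1 z.2)

/-- The key Ψ(m) ≤ 2Φ estimate. -/
lemma psi_supS_est (hψ : IsYoung ψ) (hψsl : Superlin ψ) {P w : ℝ} (hP : 0 ≤ P) (hw : 0 < w)
    (hψw : ψ w = P) : SupS ψ (P / w) ≤ 2 * P := by
  apply supS_le hψ.2.2
  intro v hv
  rcases le_total v (2 * w) with h | h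
  · have h1 : P / w * v ≤ P / w * (2 * w) := by
      apply mul_le_mul_of_nonneg_left h (by positivity)
    have h2 : P / w * (2 * w) = 2 * P := by field_simp
    have := hψ.nonneg hv
    nlinarith
  · have h1 : ψ (2 * w) * v ≤ ψ v * (2 * w) := hψ.slope (by positivity) h
    have h2 : 2 * ψ w ≤ ψ (2 * w) := hψ.scale_ge one_le_two hw.le
    have h3 : P / w * v ≤ ψ v := by
      rw [div_mul_eq_mul_div, div_le_iff₀ hw]
      nlinarith
    nlinarith [hψ.nonneg hv]

end Main
set_option maxHeartbeats 2000000 in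
/-- If φ⁻¹ ∘ ψ is equivalent to a Young function then so is (ψ*)⁻¹ ∘ φ*. -/
theorem stmt6 (φ ψ φinv : ℝ → ℝ) (hφ : IsYoung φ) (hψ : IsYoung ψ)
    (hsup : Tendsto (fun x => φ x / x) atTop atTop)
    (hinv : ∀ x ≥ (0:ℝ), 0 ≤ φinv x ∧ φ (φinv x) = x)
    (h : ∃ Y, IsYoung Y ∧ EquivR (fun x => φinv (ψ x)) Y) :
    ∃ Y, IsYoung Y ∧
      (∃ C₁ C₂ x₀ : ℝ, 0 < C₁ ∧ 0 < C₂ ∧ 0 < x₀ ∧ ∀ x ≥ x₀,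
        invE (Leg ψ) (Leg φ x) ≤ ENNReal.ofReal (C₁ * Y (C₂ * x)) ∧
        ENNReal.ofReal (Y x) ≤ ENNReal.ofReal C₁ * invE (Leg ψ) (Leg φ (C₂ * x))) := by
  classical
  obtain ⟨G, hG, ⟨⟨c₁, c₂, z₁, hc₁, hc₂, hz₁, hdom1⟩, ⟨d₁, d₂, z₂, hd₁, hd₂, hz₂, hdom2⟩⟩⟩ := h
  -- φinv basics
  have hφinv0 : ∀ t, 0 ≤ t → 0 ≤ φinv t := fun t ht => (hinv t ht).1
  have hφinv1 : ∀ t, 0 ≤ t → φ (φinv t) = t := fun t ht => (hinv t ht).2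
  have hφinvmono : ∀ t₁ t₂, 0 ≤ t₁ → t₁ ≤ t₂ → φinv t₁ ≤ φinv t₂ := by
    intro t₁ t₂ h1 h2
    apply hφ.le_of_le (hφinv0 t₁ h1) (hφinv0 t₂ (h1.trans h2))
    rw [hφinv1 t₁ h1, hφinv1 t₂ (h1.trans h2)]; exact h2
  -- unified constants
  set α : ℝ := max (max c₁ d₁) 1 with hαdef
  set β : ℝ := max (max c₂ d₂) 1 with hβdef
  set x₁ : ℝ := max (max z₁ z₂) 1 with hx₁def
  have hα1 : 1 ≤ α := le_max_right _ _
  have hβ1 : 1 ≤ β := le_max_right _ _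
  have hx₁1 : 1 ≤ x₁ := le_max_right _ _
  have hα0 : 0 < α := lt_of_lt_of_le zero_lt_one hα1
  have hβ0 : 0 < β := lt_of_lt_of_le zero_lt_one hβ1
  have hx₁0 : 0 < x₁ := lt_of_lt_of_le zero_lt_one hx₁1
  -- H1, H2
  have H1 : ∀ x, x₁ ≤ x → ψ x ≤ φ (α * G (β * x)) := by
    intro x hx
    have hx0 : 0 < x := lt_of_lt_of_le hx₁0 hx
    have hψx : 0 ≤ ψ x := hψ.nonneg hx0.le
    have h1 : φinv (ψ x) ≤ c₁ * G (c₂ * x) :=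
      hdom1 x (le_trans (le_trans (le_max_left _ _) (le_max_left _ _)) hx)
    have hG1 : G (c₂ * x) ≤ G (β * x) := by
      apply hG.mono' (by positivity)
      have : c₂ ≤ β := le_trans (le_max_left _ _) (le_max_left _ _)
      nlinarith
    have hGnn : 0 ≤ G (c₂ * x) := hG.nonneg (by positivity)
    have h2 : φinv (ψ x) ≤ α * G (β * x) := by
      have hc₁α : c₁ ≤ α := le_trans (le_max_left _ _) (le_max_left _ _)
      nlinarith [hG.nonneg (show (0:ℝ) ≤ β * x by positivity)]
    calc ψ x = φ (φinv (ψ x)) := (hφinv1 _ hψx).symm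
      _ ≤ φ (α * G (β * x)) := hφ.mono' (hφinv0 _ hψx) h2
  have H2 : ∀ x, x₁ ≤ x → φ (G x / α) ≤ ψ (β * x) := by
    intro x hx
    have hx0 : 0 < x := lt_of_lt_of_le hx₁0 hx
    have h1 : G x ≤ d₁ * φinv (ψ (d₂ * x)) :=
      hdom2 x (le_trans (le_trans (le_max_right _ _) (le_max_left _ _)) hx)
    have hψd : 0 ≤ ψ (d₂ * x) := hψ.nonneg (by positivity)
    have h2 : φinv (ψ (d₂ * x)) ≤ φinv (ψ (β * x)) := by
      apply hφinvmono _ _ hψd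
      apply hψ.mono' (by positivity)
      have : d₂ ≤ β := le_trans (le_max_right _ _) (le_max_left _ _)
      nlinarith
    have h3 : G x / α ≤ φinv (ψ (β * x)) := by
      rw [div_le_iff₀ hα0]
      have hd₁α : d₁ ≤ α := le_trans (le_max_right _ _) (le_max_left _ _)
      have := hφinv0 _ hψd
      nlinarith [hφinv0 _ (hψ.nonneg (show (0:ℝ) ≤ β * x by positivity))]
    calc φ (G x / α) ≤ φ (φinv (ψ (β * x))) := by
          apply hφ.mono' (div_nonneg (hG.nonneg hx0.le) hα0.le) h3
      _ = ψ (β * x) := hφinv1 _ (hψ.nonneg (by positivity))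
  -- superlinearity
  have hφsl : Superlin φ := by
    intro s
    obtain ⟨Z, hZ⟩ := eventually_atTop.1 (hsup.eventually_ge_atTop s)
    refine ⟨max Z 1, by positivity, ?_⟩
    intro v hv
    have hv1 : (1:ℝ) ≤ v := le_trans (le_max_right _ _) hv
    have hv0 : 0 < v := lt_of_lt_of_le zero_lt_one hv1
    have := hZ v (le_trans (le_max_left _ _) hv)
    rw [le_div_iff₀ hv0] at this
    linarith
  have hG1pos : 0 < G 1 := hG.pos zero_lt_one
  have hψsl : Superlin ψ := by
    intro s
    set ε : ℝ := G 1 / (α * β) with hεdef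
    have hε0 : 0 < ε := by positivity
    obtain ⟨Z, hZ⟩ := eventually_atTop.1 (hsup.eventually_ge_atTop (s / ε))
    refine ⟨max (β * x₁) (max 1 ((max Z 1) / ε)), by positivity, ?_⟩
    intro v hv
    have hv1 : β * x₁ ≤ v := le_trans (le_max_left _ _) hv
    have hvβ : x₁ ≤ v / β := by rw [le_div_iff₀ hβ0]; nlinarith
    have hv0 : 0 < v := lt_of_lt_of_le (by positivity) hv1
    have hvβ1 : 1 ≤ v / β := le_trans hx₁1 hvβ
    have h1 : φ (G (v / β) / α) ≤ ψ v := by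
      have := H2 (v / β) hvβ
      rw [mul_div_cancel₀ _ (ne_of_gt hβ0)] at this
      exact this
    have h2 : ε * v ≤ G (v / β) / α := by
      have := hG.lin_growth hvβ1
      rw [hεdef, div_mul_eq_mul_div, div_le_div_iff₀ (by positivity) hα0]
      have hb : G 1 * (v / β) * β = G 1 * v := by field_simp
      nlinarith [mul_le_mul_of_nonneg_right this (show (0:ℝ) ≤ α * β by positivity)]
    have h3 : φ (ε * v) ≤ φ (G (v / β) / α) := hφ.mono' (by positivity) h2
    have h4 : s * v ≤ φ (ε * v) := by
      have hεvZ : max Z 1 ≤ ε * v := by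
        have : (max Z 1) / ε ≤ v := le_trans (le_max_right _ _) (le_trans (le_max_right _ _) hv)
        rw [div_le_iff₀ hε0] at this
        nlinarith
      have := hZ (ε * v) (le_trans (le_max_left _ _) hεvZ)
      have hεv0 : 0 < ε * v := by positivity
      rw [le_div_iff₀ hεv0] at this
      calc s * v = (s / ε) * (ε * v) := by
            field_simp
        _ ≤ φ (ε * v) := this
    linarith
  -- real Legendre of φ and inverses
  set Φ : ℝ → ℝ := SupS φ with hΦdef
  obtain ⟨ψinv, hψinv0, hψinv1, hψinvmono, hψinv2⟩ := hψ.inv_pack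
  obtain ⟨Ginv, hGinv0, hGinv1, hGinvmono, hGinv2⟩ := hG.inv_pack
  have hΦ0 : ∀ x, 0 ≤ x → 0 ≤ Φ x := fun x hx => supS_nonneg hφ hφsl hx
  have hΦmono : ∀ x y, 0 ≤ x → x ≤ y → Φ x ≤ Φ y := fun x y hx hxy => supS_mono hφ hφsl hx hxy
  have hΦlin : ∀ x, 0 ≤ x → x - φ 1 ≤ Φ x := by
    intro x hx
    have := le_supS hφ hφsl hx (y := 1) zero_le_one
    simpa using this
  -- threshold x₀
  set x₀ : ℝ := max 1 (φ 1 + max 4 (ψ ((β + 1) * x₁))) with hx₀def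
  have hx₀1 : 1 ≤ x₀ := le_max_left _ _
  have hx₀0 : 0 < x₀ := lt_of_lt_of_le zero_lt_one hx₀1
  have hΦbig : ∀ x, x₀ ≤ x → max 4 (ψ ((β + 1) * x₁)) ≤ Φ x := by
    intro x hx
    have h1 : x - φ 1 ≤ Φ x := hΦlin x (le_trans hx₀0.le hx)
    have h2 : φ 1 + max 4 (ψ ((β + 1) * x₁)) ≤ x := le_trans (le_max_right _ _) hx
    linarith
  have hΦ4 : ∀ x, x₀ ≤ x → 4 ≤ Φ x := fun x hx => le_trans (le_max_left _ _) (hΦbig x hx)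
  -- w and u
  set w : ℝ → ℝ := fun x => ψinv (Φ x) with hwdef
  set u : ℝ → ℝ := fun x => φinv (Φ x) with hudef
  have hw0 : ∀ x, 0 ≤ x → 0 ≤ w x := fun x hx => hψinv0 _ (hΦ0 x hx)
  have hwψ : ∀ x, 0 ≤ x → ψ (w x) = Φ x := fun x hx => hψinv1 _ (hΦ0 x hx)
  have hu0 : ∀ x, 0 ≤ x → 0 ≤ u x := fun x hx => hφinv0 _ (hΦ0 x hx)
  have huφ : ∀ x, 0 ≤ x → φ (u x) = Φ x := fun x hx => hφinv1 _ (hΦ0 x hx)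
  have humono : ∀ x y, 0 ≤ x → x ≤ y → u x ≤ u y := by
    intro x y hx hxy
    exact hφinvmono _ _ (hΦ0 x hx) (hΦmono x y hx hxy)
  have hwbig : ∀ x, x₀ ≤ x → (β + 1) * x₁ ≤ w x := by
    intro x hx
    have hx0 : 0 ≤ x := le_trans hx₀0.le hx
    apply hψ.le_of_le (by positivity) (hw0 x hx0)
    rw [hwψ x hx0]
    exact le_trans (le_max_right _ _) (hΦbig x hx)
  have hwx₁ : ∀ x, x₀ ≤ x → x₁ ≤ w x := by
    intro x hx
    have := hwbig x hx
    nlinarith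
  have hwβx₁ : ∀ x, x₀ ≤ x → x₁ ≤ w x / β := by
    intro x hx
    rw [le_div_iff₀ hβ0]
    have := hwbig x hx
    nlinarith
  have hwpos : ∀ x, x₀ ≤ x → 0 < w x := fun x hx => lt_of_lt_of_le hx₁0 (hwx₁ x hx)
  have hupos : ∀ x, x₀ ≤ x → 0 < u x := by
    intro x hx
    have hx0 : 0 ≤ x := le_trans hx₀0.le hx
    rcases lt_or_eq_of_le (hu0 x hx0) with h | h
    · exact h
    · exfalso
      have := huφ x hx0
      rw [← h, hφ.2.2] at this
      have := hΦ4 x hx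
      linarith
  -- identity 1 : Φ x ≤ x * u x
  have hid1 : ∀ x, x₀ ≤ x → Φ x ≤ x * u x := by
    intro x hx
    have hx0 : 0 < x := lt_of_lt_of_le hx₀0 hx
    by_contra hcon
    push_neg at hcon
    obtain ⟨v, hv0, hv⟩ := supS_exists_gt hφ.2.2 hcon
    have hvu : u x < v := by
      by_contra hvu
      push_neg at hvu
      have h1 : x * v ≤ x * u x := mul_le_mul_of_nonneg_left hvu hx0.le
      have h2 : 0 ≤ φ v := hφ.nonneg hv0
      linarith
    have hslope : φ (u x) * v ≤ φ v * u x := hφ.slope (hu0 x hx0.le) hvu.le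
    rw [huφ x hx0.le] at hslope
    -- Φ x * v ≤ φ v * u x ; and x * v - φ v > x * u x ; Φ x > x * u x
    have hupos' : 0 < u x := hupos x hx
    have k1 : (x * u x) * v < Φ x * v := mul_lt_mul_of_pos_right hcon (lt_trans hupos' hvu)
    have k2 : φ v * u x < (x * v - x * u x) * u x := by
      apply mul_lt_mul_of_pos_right _ hupos'
      linarith
    have k3 : (x * u x) * v < (x * v - x * u x) * u x := (k1.trans_le hslope).trans k2
    have p : 0 < x * u x * u x := mul_pos (mul_pos hx0 hupos') hupos'
    nlinarith [k3, p]
  -- identity 2 : x * u x ≤ 2 * Φ x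
  have hid2 : ∀ x, 0 ≤ x → x * u x ≤ 2 * Φ x := by
    intro x hx
    have := le_supS hφ hφsl hx (hu0 x hx)
    rw [huφ x hx] at this
    linarith
  -- relations between u and w via G
  have ha2 : ∀ x, x₀ ≤ x → u x ≤ α * G (β * w x) := by
    intro x hx
    have hx0 : 0 ≤ x := le_trans hx₀0.le hx
    have h1 := H1 (w x) (hwx₁ x hx)
    rw [hwψ x hx0] at h1
    rw [← huφ x hx0] at h1
    exact hφ.le_of_le (hu0 x hx0)
      (mul_nonneg hα0.le (hG.nonneg (mul_nonneg hβ0.le (hw0 x hx0)))) h1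
  have ha4 : ∀ x, x₀ ≤ x → G (w x / β) ≤ α * u x := by
    intro x hx
    have hx0 : 0 ≤ x := le_trans hx₀0.le hx
    have h1 := H2 (w x / β) (hwβx₁ x hx)
    rw [mul_div_cancel₀ _ (ne_of_gt hβ0), hwψ x hx0, ← huφ x hx0] at h1
    have h2 : G (w x / β) / α ≤ u x :=
      hφ.le_of_le (div_nonneg (hG.nonneg (div_nonneg (hw0 x hx0) hβ0.le)) hα0.le)
        (hu0 x hx0) h1
    rw [div_le_iff₀ hα0] at h2
    nlinarith [hu0 x hx0]
  -- rho monotone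
  have hρ : ∀ t₁ t₂, 0 ≤ t₁ → t₁ ≤ t₂ → t₁ / Ginv t₁ ≤ t₂ / Ginv t₂ := by
    intro t₁ t₂ h0 h12
    have h02 : 0 ≤ t₂ := h0.trans h12
    have hs12 : Ginv t₁ ≤ Ginv t₂ := hGinvmono _ _ h0 h12
    have e1 : G (Ginv t₁) = t₁ := hGinv1 _ h0
    have e2 : G (Ginv t₂) = t₂ := hGinv1 _ h02
    rcases eq_or_lt_of_le (hGinv0 t₁ h0) with hz | hz
    · have ht₁ : t₁ = 0 := by rw [← e1, ← hz, hG.2.2]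
      rw [ht₁, zero_div]
      exact div_nonneg h02 (hGinv0 _ h02)
    · have hs2pos : 0 < Ginv t₂ := lt_of_lt_of_le hz hs12
      rw [div_le_div_iff₀ hz hs2pos]
      have := hG.slope (a := Ginv t₁) (b := Ginv t₂) (hGinv0 _ h0) hs12
      rw [e1, e2] at this
      exact this
  -- the constant K
  set K : ℝ := 2 * α * α * β * β with hKdef
  have hK0 : 0 < K := by positivity
  have hK2 : 2 ≤ K := by
    rw [hKdef]
    have a2 : 1 ≤ α * α := by nlinarith
    have b2 : 1 ≤ β * β := by nlinarith
    nlinarith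
  -- quasi-monotonicity of the slope
  have hQMS : ∀ s t, x₀ ≤ s → s ≤ t → Φ s / (s * w s) ≤ K * (Φ t / (t * w t)) := by
    intro s t hs hst
    have ht : x₀ ≤ t := hs.trans hst
    have hs0 : 0 < s := lt_of_lt_of_le hx₀0 hs
    have ht0 : 0 < t := lt_of_lt_of_le hx₀0 ht
    have hws : 0 < w s := hwpos s hs
    have hwt : 0 < w t := hwpos t ht
    have hus : 0 < u s := hupos s hs
    have hut : 0 < u t := hupos t ht
    -- b1 : Ginv (u s / α) ≤ β * w s
    have hb1 : Ginv (u s / α) ≤ β * w s := by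
      have h1 : u s / α ≤ G (β * w s) := by
        rw [div_le_iff₀ hα0]
        have := ha2 s hs
        nlinarith [hG.nonneg (mul_nonneg hβ0.le (hw0 s hs0.le))]
      calc Ginv (u s / α) ≤ Ginv (G (β * w s)) :=
            hGinvmono _ _ (div_nonneg hus.le hα0.le) h1
        _ = β * w s := hGinv2 _ (mul_nonneg hβ0.le hws.le)
    have hg1pos : 0 < Ginv (u s / α) := by
      rcases eq_or_lt_of_le (hGinv0 (u s / α) (div_nonneg hus.le hα0.le)) with hz | hz
      · exfalso
        have := hGinv1 (u s / α) (div_nonneg hus.le hα0.le)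
        rw [← hz, hG.2.2] at this
        have : u s / α = 0 := this.symm
        have := div_pos hus hα0
        linarith
      · exact hz
    -- b2 : w t / β ≤ Ginv (α * u t)
    have hb2 : w t / β ≤ Ginv (α * u t) := by
      have h1 : G (w t / β) ≤ α * u t := ha4 t ht
      calc w t / β = Ginv (G (w t / β)) := (hGinv2 _ (div_nonneg hwt.le hβ0.le)).symm
        _ ≤ Ginv (α * u t) := hGinvmono _ _ (hG.nonneg (div_nonneg hwt.le hβ0.le)) h1
    have hg2pos : 0 < Ginv (α * u t) := lt_of_lt_of_le (div_pos hwt hβ0) hb2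
    -- step3
    have hstep3 : (u s / α) * Ginv (α * u t) ≤ (α * u t) * Ginv (u s / α) := by
      have h1 : u s / α ≤ α * u t := by
        have h2 : u s ≤ u t := humono s t hs0.le hst
        have h3 : u s / α ≤ u s := div_le_self hus.le hα1
        nlinarith
      have := hρ (u s / α) (α * u t) (div_nonneg hus.le hα0.le) h1
      rw [div_le_div_iff₀ hg1pos hg2pos] at this
      exact this
    -- m1 ... m5
    have m1 : u s * Ginv (α * u t) ≤ α * α * u t * Ginv (u s / α) := by
      have := mul_le_mul_of_nonneg_left hstep3 hα0.le
      have e : α * (u s / α * Ginv (α * u t)) = u s * Ginv (α * u t) := by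
        field_simp
      rw [e] at this
      nlinarith
    have m2 : u s * Ginv (α * u t) ≤ (α * α * u t) * (β * w s) :=
      m1.trans (mul_le_mul_of_nonneg_left hb1
        (mul_nonneg (mul_nonneg hα0.le hα0.le) hut.le))
    have m3 : u s * (w t / β) ≤ u s * Ginv (α * u t) :=
      mul_le_mul_of_nonneg_left hb2 hus.le
    have m4 : u s * (w t / β) ≤ (α * α * u t) * (β * w s) := m3.trans m2
    have m5 : u s * w t ≤ (α * α * β * β) * (u t * w s) := by
      have := mul_le_mul_of_nonneg_left m4 hβ0.le
      have e1 : β * (u s * (w t / β)) = u s * w t := by field_simp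
      have e2 : β * ((α * α * u t) * (β * w s)) = (α * α * β * β) * (u t * w s) := by ring
      rw [e1, e2] at this
      exact this
    -- main multiplicative chain
    have key : Φ s * (t * w t) ≤ K * Φ t * (s * w s) := by
      calc Φ s * (t * w t) ≤ (s * u s) * (t * w t) :=
            mul_le_mul_of_nonneg_right (hid1 s hs) (mul_nonneg ht0.le hwt.le)
        _ = (s * t) * (u s * w t) := by ring
        _ ≤ (s * t) * ((α * α * β * β) * (u t * w s)) :=
            mul_le_mul_of_nonneg_left m5 (mul_nonneg hs0.le ht0.le)
        _ = ((α * α * β * β) * (s * w s)) * (t * u t) := by ring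
        _ ≤ ((α * α * β * β) * (s * w s)) * (2 * Φ t) := by
            apply mul_le_mul_of_nonneg_left (hid2 t ht0.le)
            exact mul_nonneg (by positivity) (mul_nonneg hs0.le hws.le)
        _ = K * Φ t * (s * w s) := by rw [hKdef]; ring
    rw [mul_div_assoc', div_le_div_iff₀ (mul_pos hs0 hws) (mul_pos ht0 hwt)]
    exact key
  -- the slope function n and Young function Y
  set mr : ℝ → ℝ := fun r => Φ r / (r * w r) with hmrdef
  have hmrpos : ∀ r, x₀ ≤ r → 0 < mr r := by
    intro r hr
    have hr0 : 0 < r := lt_of_lt_of_le hx₀0 hr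
    exact div_pos (lt_of_lt_of_le (by norm_num) (hΦ4 r hr)) (mul_pos hr0 (hwpos r hr))
  set n : ℝ → ℝ := fun t => sSup (mr '' Icc x₀ (max t x₀)) with hndef
  have hmemx₀ : ∀ t : ℝ, mr x₀ ∈ mr '' Icc x₀ (max t x₀) :=
    fun t => mem_image_of_mem _ ⟨le_refl _, le_max_right _ _⟩
  have hbdd : ∀ t : ℝ, BddAbove (mr '' Icc x₀ (max t x₀)) := by
    intro t
    refine ⟨K * mr (max t x₀), ?_⟩
    rintro z ⟨r, hr, rfl⟩
    exact hQMS r (max t x₀) hr.1 hr.2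
  have hnmono : Monotone n := by
    intro t₁ t₂ h
    apply csSup_le_csSup (hbdd t₂) ⟨mr x₀, hmemx₀ t₁⟩
    apply Set.image_mono
    exact Icc_subset_Icc le_rfl (max_le_max h le_rfl)
  have hnlb : ∀ t : ℝ, mr x₀ ≤ n t := fun t => le_csSup (hbdd t) (hmemx₀ t)
  have hnlb2 : ∀ t, x₀ ≤ t → mr t ≤ n t := by
    intro t ht
    exact le_csSup (hbdd t) (mem_image_of_mem _ ⟨ht, le_max_left _ _⟩)
  have hnub : ∀ t, x₀ ≤ t → n t ≤ K * mr t := by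
    intro t ht
    apply csSup_le ⟨mr x₀, hmemx₀ t⟩
    rintro z ⟨r, hr, rfl⟩
    exact hQMS r t hr.1 (hr.2.trans_eq (max_eq_left ht))
  have hc : 0 < mr x₀ := hmrpos x₀ le_rfl
  set Y : ℝ → ℝ := fun x => ∫ t in (0:ℝ)..x, n t with hYdef
  have hYoung : IsYoung Y := intY_young hnmono hc hnlb
  have hY0 : ∀ x, 0 ≤ x → 0 ≤ Y x := fun x hx => intY_nonneg hnmono hc hnlb x hx
  have hYle : ∀ x, x₀ ≤ x → Y x ≤ K * (Φ x / w x) := by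
    intro x hx
    have hx0 : 0 < x := lt_of_lt_of_le hx₀0 hx
    have h1 : Y x ≤ x * n x := intY_le hnmono x hx0.le
    have h2 : x * n x ≤ x * (K * mr x) :=
      mul_le_mul_of_nonneg_left (hnub x hx) hx0.le
    have e : x * (K * mr x) = K * (Φ x / w x) := by
      have em : mr x = Φ x / (x * w x) := by rw [hmrdef]
      rw [em]
      field_simp [hx0.ne', (hwpos x hx).ne']
    linarith
  have hYge : ∀ x, x₀ ≤ x → Φ x / w x ≤ Y (2 * x) := by
    intro x hx
    have hx0 : 0 < x := lt_of_lt_of_le hx₀0 hx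
    have h1 : x * n x ≤ Y (2 * x) := intY_two hnmono hc hnlb x hx0.le
    have h2 : x * mr x ≤ x * n x := mul_le_mul_of_nonneg_left (hnlb2 x hx) hx0.le
    have e : x * mr x = Φ x / w x := by
      have em : mr x = Φ x / (x * w x) := by rw [hmrdef]
      rw [em]
      field_simp [hx0.ne', (hwpos x hx).ne']
    linarith
  -- conclusion
  refine ⟨Y, hYoung, 4 * K, 2, x₀, by positivity, by norm_num, hx₀0, ?_⟩
  intro x hx
  have hx0 : 0 ≤ x := le_trans hx₀0.le hx
  have hwx0 : 0 ≤ w x := hw0 x hx0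
  have hwxpos : 0 < w x := hwpos x hx
  constructor
  · -- upper bound
    have hs₂0 : 0 ≤ 4 * K * Y (2 * x) := by
      have := hY0 (2 * x) (by linarith)
      positivity
    have h2m : 2 * Φ x ≤ (4 * K * Y (2 * x)) * w x := by
      have h1 : Φ x / w x ≤ Y (2 * x) := hYge x hx
      have h3 : 2 * (Φ x / w x) ≤ 4 * K * Y (2 * x) := by
        have hY2 : 0 ≤ Y (2 * x) := hY0 (2 * x) (by linarith)
        nlinarith
      calc 2 * Φ x = (2 * (Φ x / w x)) * w x := by
            field_simp [hwxpos.ne']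
        _ ≤ (4 * K * Y (2 * x)) * w x := mul_le_mul_of_nonneg_right h3 hwx0
    have hU : Leg φ x ≤ Leg ψ (4 * K * Y (2 * x)) := by
      apply iSup_le
      rintro ⟨y, hy⟩
      have h1 : x * y - φ y ≤ Φ x := le_supS hφ hφsl hx0 hy
      have h2 : Φ x ≤ (4 * K * Y (2 * x)) * w x - ψ (w x) := by
        rw [hwψ x hx0]
        linarith
      calc ENNReal.ofReal (x * y - φ y)
          ≤ ENNReal.ofReal ((4 * K * Y (2 * x)) * w x - ψ (w x)) :=
            ENNReal.ofReal_le_ofReal (h1.trans h2)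
        _ ≤ Leg ψ (4 * K * Y (2 * x)) := le_leg ψ hwx0
    exact iInf_le (fun s : {s : ℝ // 0 ≤ s ∧ Leg φ x ≤ Leg ψ s} =>
      ENNReal.ofReal s.1) ⟨4 * K * Y (2 * x), hs₂0, hU⟩
  · -- lower bound
    have key : ∀ s', 0 ≤ s' → Leg φ (2 * x) ≤ Leg ψ s' → Y x / (4 * K) ≤ s' := by
      intro s' hs'0 hle
      by_contra hlt
      push_neg at hlt
      have hYx : Y x ≤ K * (Φ x / w x) := hYle x hx
      have hs'4 : s' ≤ Φ x / w x / 4 := by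
        have h1 : Y x / (4 * K) ≤ K * (Φ x / w x) / (4 * K) := by
          apply div_le_div_of_nonneg_right hYx (by positivity)
        have e : K * (Φ x / w x) / (4 * K) = Φ x / w x / 4 := by
          field_simp [hK0.ne', hwxpos.ne']
        linarith
      have hb1 : SupS ψ s' ≤ SupS ψ (Φ x / w x / 4) := supS_mono hψ hψsl hs'0 hs'4
      have hb2 : 4 * SupS ψ (Φ x / w x / 4) ≤ SupS ψ (4 * (Φ x / w x / 4)) :=
        supS_scale hψ hψsl (by norm_num)
          (div_nonneg (div_nonneg (hΦ0 x hx0) hwx0) (by norm_num))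
      have e4 : 4 * (Φ x / w x / 4) = Φ x / w x := by ring
      have hb3 : SupS ψ (Φ x / w x) ≤ 2 * Φ x :=
        psi_supS_est hψ hψsl (hΦ0 x hx0) hwxpos (hwψ x hx0)
      have hΨs' : SupS ψ s' ≤ Φ x - 2 := by
        rw [e4] at hb2
        have := hΦ4 x hx
        linarith
      obtain ⟨yu, hyu0, hyu⟩ := supS_exists_gt (f := φ) hφ.2.2
        (show Φ (2 * x) - 1 < SupS φ (2 * x) by
          have : (0:ℝ) < 1 := one_pos
          linarith)
      have hΦΦ : Φ x ≤ Φ (2 * x) := hΦmono x (2 * x) hx0 (by linarith)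
      have hfin1 : SupS ψ s' < 2 * x * yu - φ yu := by linarith
      have hfin2 : 0 < 2 * x * yu - φ yu := by
        have := hΦ4 x hx
        linarith
      have c1 : Leg ψ s' ≤ ENNReal.ofReal (SupS ψ s') :=
        leg_le (fun y hy => le_supS hψ hψsl hs'0 hy)
      have c2 : ENNReal.ofReal (SupS ψ s') < ENNReal.ofReal (2 * x * yu - φ yu) :=
        (ENNReal.ofReal_lt_ofReal_iff hfin2).2 hfin1
      have c3 : ENNReal.ofReal (2 * x * yu - φ yu) ≤ Leg φ (2 * x) := le_leg φ hyu0
      have : Leg φ (2 * x) < Leg φ (2 * x) :=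
        lt_of_le_of_lt (hle.trans c1) (lt_of_lt_of_le c2 c3)
      exact lt_irrefl _ this
    have hg : ENNReal.ofReal (Y x / (4 * K)) ≤ invE (Leg ψ) (Leg φ (2 * x)) :=
      le_iInf (fun s => ENNReal.ofReal_le_ofReal (key s.1 s.2.1 s.2.2))
    calc ENNReal.ofReal (Y x)
        = ENNReal.ofReal (4 * K) * ENNReal.ofReal (Y x / (4 * K)) := by
          rw [← ENNReal.ofReal_mul (by positivity)]
          congr 1
          field_simp
        _ ≤ ENNReal.ofReal (4 * K) * invE (Leg ψ) (Leg φ (2 * x)) :=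
          mul_le_mul_right hg _
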